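/- Let I be an Ulrich ideal of A = k⟦t⁵, t¹¹⟧ admitting elements f, g ∈ I with I = (f, g), I² = fI, o(f) = 20 and o(g) = 26. Then there exist α₁, α₂, α₃, α₄, β₁, β₂, ε ∈ k such that I = (t²⁰ + α₁t²¹ + α₂t²² + α₃t²⁷ + α₄t³³, t²⁶ + β₁t²⁷ + β₂t³³) and t³² + εt³³ ∈ I. -/

import Mathlib

noncomputable section

open PowerSeries

set_option synthInstance.maxHeartbeats 400000
set_option maxHeartbeats 800000

variable (k : Type*) [Field k]

/-- The subalgebra of `k⟦t⟧` consisting of power series supported on an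
additive submonoid `S ⊆ ℕ` (the "semigroup ring" of `S`). -/
def semigroupRing (S : AddSubmonoid ℕ) : Subalgebra k (PowerSeries k) where
  carrier := {f | ∀ n : ℕ, coeff n f ≠ 0 → n ∈ S}
  zero_mem' := by intro n hn; simp at hn
  add_mem' := by
    intro f g hf hg n hn
    by_contra h
    exact hn (by
      rw [map_add, of_not_not fun h1 => h (hf n h1), of_not_not fun h2 => h (hg n h2), add_zero])
  one_mem' := by
    intro n hn
    rw [coeff_one] at hn
    simp only [ne_eq, ite_eq_right_iff, not_forall] at hn
    exact hn.1 ▸ S.zero_mem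
  mul_mem' := by
    intro f g hf hg n hn
    rw [coeff_mul] at hn
    obtain ⟨p, hp, hne⟩ := Finset.exists_ne_zero_of_sum_ne_zero hn
    rw [Finset.HasAntidiagonal.mem_antidiagonal] at hp
    exact hp ▸ S.add_mem (hf p.1 (left_ne_zero_of_mul hne)) (hg p.2 (right_ne_zero_of_mul hne))
  algebraMap_mem' := by
    intro a n hn
    have : (algebraMap k (PowerSeries k)) a = C a := rfl
    rw [this, coeff_C] at hn
    simp only [ne_eq, ite_eq_right_iff, not_forall] at hn
    exact hn.1 ▸ S.zero_mem

lemma X_pow_mem {S : AddSubmonoid ℕ} {n : ℕ} (hn : n ∈ S) :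
    (X : PowerSeries k) ^ n ∈ semigroupRing k S := by
  intro m hm
  rw [coeff_X_pow] at hm
  simp only [ne_eq, ite_eq_right_iff, not_forall] at hm
  exact hm.1 ▸ hn

/-- The maximal ideal of a subalgebra of `k⟦t⟧`: the kernel of the constant-coefficient map. -/
def maximalIdealOf (A : Subalgebra k (PowerSeries k)) : Ideal A :=
  RingHom.ker ((constantCoeff : PowerSeries k →+* k).comp A.val.toRingHom)

/-- `I` is an Ulrich ideal of `A`: `I` is `m`-primary, and there is `a ∈ I` such that `(a)`
is a reduction of `I`, `I ≠ (a)`, `I² = aI`, and `I/I²` is a free `A/I`-module. -/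
def IsUlrichIdeal (A : Subalgebra k (PowerSeries k)) (I : Ideal A) : Prop :=
  I.IsPrimary ∧ I.radical = maximalIdealOf k A ∧
  ∃ a ∈ I, (∃ n : ℕ, I ^ (n + 1) = Ideal.span {a} * I ^ n) ∧
    I ≠ Ideal.span {a} ∧
    I ^ 2 = Ideal.span {a} * I ∧
    Module.Free (A ⧸ I) I.Cotangent

/-- `A = k⟦t⁵, t¹¹⟧`. -/
def A511 : Subalgebra k (PowerSeries k) :=
  semigroupRing k (AddSubmonoid.closure ({5, 11} : Set ℕ))

lemma mem511 {n : ℕ} (a b : ℕ) (h : a * 5 + b * 11 = n) :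
    n ∈ AddSubmonoid.closure ({5, 11} : Set ℕ) := by
  subst h
  have h5 : (5 : ℕ) ∈ AddSubmonoid.closure ({5, 11} : Set ℕ) :=
    AddSubmonoid.subset_closure (by norm_num)
  have h11 : (11 : ℕ) ∈ AddSubmonoid.closure ({5, 11} : Set ℕ) :=
    AddSubmonoid.subset_closure (by norm_num)
  simpa [smul_eq_mul] using add_mem (nsmul_mem h5 a) (nsmul_mem h11 b)

/-- `f = t²⁰ + αt²¹ + βt²² + γt²⁷ + δt³³` as an element of `A = k⟦t⁵,t¹¹⟧`. -/
def genF (α β γ δ : k) : A511 k :=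
  ⟨X ^ 20 + α • X ^ 21 + β • X ^ 22 + γ • X ^ 27 + δ • X ^ 33, by
    refine add_mem (add_mem (add_mem (add_mem (X_pow_mem k (mem511 4 0 (by norm_num)))
      (Subalgebra.smul_mem _ (X_pow_mem k (mem511 2 1 (by norm_num))) α))
      (Subalgebra.smul_mem _ (X_pow_mem k (mem511 0 2 (by norm_num))) β))
      (Subalgebra.smul_mem _ (X_pow_mem k (mem511 1 2 (by norm_num))) γ))
      (Subalgebra.smul_mem _ (X_pow_mem k (mem511 0 3 (by norm_num))) δ)⟩

/-- `g = t²⁶ + εt²⁷ + τt³³` as an element of `A = k⟦t⁵,t¹¹⟧`. -/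
def genG (ε τ : k) : A511 k :=
  ⟨X ^ 26 + ε • X ^ 27 + τ • X ^ 33, by
    refine add_mem (add_mem (X_pow_mem k (mem511 3 1 (by norm_num)))
      (Subalgebra.smul_mem _ (X_pow_mem k (mem511 1 2 (by norm_num))) ε))
      (Subalgebra.smul_mem _ (X_pow_mem k (mem511 0 3 (by norm_num))) τ)⟩

/-- `f = t¹⁰ + α₁t¹¹ + α₂t¹⁶ + α₃t²²` as an element of `A = k⟦t⁵,t¹¹⟧`. -/
def genF10 (α₁ α₂ α₃ : k) : A511 k :=
  ⟨X ^ 10 + α₁ • X ^ 11 + α₂ • X ^ 16 + α₃ • X ^ 22, by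
    refine add_mem (add_mem (add_mem (X_pow_mem k (mem511 2 0 (by norm_num)))
      (Subalgebra.smul_mem _ (X_pow_mem k (mem511 0 1 (by norm_num))) α₁))
      (Subalgebra.smul_mem _ (X_pow_mem k (mem511 1 1 (by norm_num))) α₂))
      (Subalgebra.smul_mem _ (X_pow_mem k (mem511 0 2 (by norm_num))) α₃)⟩

/-- `g = t²⁷` as an element of `A = k⟦t⁵,t¹¹⟧`. -/
def genG27 : A511 k :=
  ⟨X ^ 27, X_pow_mem k (mem511 1 2 (by norm_num))⟩

/-- `t³² + εt³³` as an element of `A = k⟦t⁵,t¹¹⟧`. -/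
def elt32 (ε : k) : A511 k :=
  ⟨X ^ 32 + ε • X ^ 33, by
    refine add_mem (X_pow_mem k (mem511 2 2 (by norm_num)))
      (Subalgebra.smul_mem _ (X_pow_mem k (mem511 0 3 (by norm_num))) ε)⟩


section UlrichAux

open Finset

variable {k : Type*} [Field k]

local notation "HH" => AddSubmonoid.closure ({5, 11} : Set ℕ)
local notation "KK" => PowerSeries k

lemma memHH_iff {n : ℕ} : n ∈ HH ↔ ∃ a b : ℕ, a * 5 + b * 11 = n := by
  rw [AddSubmonoid.mem_closure_pair]
  constructor
  · rintro ⟨a, b, h⟩; exact ⟨a, b, by simpa [smul_eq_mul] using h⟩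
  · rintro ⟨a, b, h⟩; exact ⟨a, b, by simpa [smul_eq_mul] using h⟩

lemma smallHH {i : ℕ} (h1 : i < 20) (h2 : i ∈ HH) :
    i = 0 ∨ i = 5 ∨ i = 10 ∨ i = 11 ∨ i = 15 ∨ i = 16 := by
  obtain ⟨a, b, hab⟩ := memHH_iff.mp h2
  have ha : a ≤ 3 := by omega
  have hb : b ≤ 1 := by omega
  interval_cases a <;> interval_cases b <;> omega

/-- coefficients of elements of `A511` vanish at small non-semigroup indices -/
lemma coeffA_zero (p : A511 k) {i : ℕ} (h1 : i < 20)
    (h2 : ¬ (i = 0 ∨ i = 5 ∨ i = 10 ∨ i = 11 ∨ i = 15 ∨ i = 16)) :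
    coeff i (p : KK) = 0 := by
  by_contra hc
  exact h2 (smallHH h1 (p.2 i hc))

lemma coeffA_zero' (p : A511 k) {i : ℕ} (h1 : i ∉ HH) : coeff i (p : KK) = 0 := by
  by_contra hc
  exact h1 (p.2 i hc)

lemma coeff_mul_support (p x : KK) (n : ℕ) (s : Finset ℕ)
    (hs : s ⊆ Finset.range (n+1))
    (hother : ∀ i ∈ Finset.range (n+1), i ∉ s → coeff i p = 0 ∨ coeff (n - i) x = 0) :
    coeff n (p * x) = ∑ i ∈ s, coeff i p * coeff (n - i) x := by
  rw [coeff_mul, Finset.Nat.sum_antidiagonal_eq_sum_range_succ (fun i j => coeff i p * coeff j x)]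
  exact (Finset.sum_subset hs (fun i hi his => by
    rcases hother i hi his with h | h <;> simp [h])).symm

lemma order_add_eq_enat {a b : ℕ} {o : ℕ∞} (h : (a:ℕ∞) + o = (b:ℕ∞)) : o = ((b - a : ℕ) : ℕ∞) := by
  induction o using ENat.recTopCoe with
  | top => simp at h
  | coe n =>
    have h2 : a + n = b := by exact_mod_cast h
    congr 1
    omega

lemma ordElt {x : KK} {n : ℕ} (h : PowerSeries.order x = (n : ℕ∞)) :
    (∀ j < n, coeff j x = 0) ∧ coeff n x ≠ 0 := by
  refine ⟨fun j hj => PowerSeries.coeff_of_lt_order j ?_, (PowerSeries.order_eq_nat.mp h).1⟩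
  rw [h]
  exact_mod_cast hj

/-- inverses of power series with unit constant coefficient stay supported on `S`. -/
lemma inv_mem_semigroupRing {S : AddSubmonoid ℕ} {x : KK} (hx : x ∈ semigroupRing k S) :
    x⁻¹ ∈ semigroupRing k S := by
  intro n
  induction n using Nat.strong_induction_on with
  | _ n ih =>
    intro hn
    by_contra hnS
    apply hn
    rw [PowerSeries.coeff_inv]
    split
    · exact absurd (by rename_i hh; exact hh ▸ S.zero_mem) hnS
    · rw [mul_eq_zero]
      right
      apply Finset.sum_eq_zero
      rintro ⟨i, j⟩ hij
      rw [Finset.HasAntidiagonal.mem_antidiagonal] at hij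
      split
      · rename_i hjn
        by_cases hj : coeff j x⁻¹ = 0
        · rw [hj, mul_zero]
        · by_cases hi : coeff i x = 0
          · rw [hi, zero_mul]
          · exact absurd (hij ▸ S.add_mem (hx i hi) (ih j hjn hj)) hnS
      · rfl

lemma isUnit_A511 (x : A511 k) (hx : constantCoeff (x : KK) ≠ 0) : IsUnit x := by
  refine IsUnit.of_mul_eq_one (a := x) ⟨(x : KK)⁻¹, inv_mem_semigroupRing x.2⟩ ?_
  apply Subtype.ext
  exact PowerSeries.mul_inv_cancel _ hx

lemma mem_maximalIdealOf_iff {x : A511 k} :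
    x ∈ maximalIdealOf k (A511 k) ↔ constantCoeff (x : KK) = 0 := by
  rw [maximalIdealOf, RingHom.mem_ker]
  rfl

lemma maxIdeal_le_jacobson : maximalIdealOf k (A511 k) ≤ (⊥ : Ideal (A511 k)).jacobson := by
  intro x hx
  rw [Ideal.mem_jacobson_bot]
  intro y
  apply isUnit_A511
  rw [mem_maximalIdealOf_iff] at hx
  have : ((x * y + 1 : A511 k) : KK) = (x:KK) * (y:KK) + 1 := rfl
  rw [this, map_add, map_mul, hx, zero_mul, map_one, zero_add]
  exact one_ne_zero

def ddA (c : ℕ → k) (E : ℕ → ℕ → k) (x : ℕ → k) : ℕ → k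
  | n =>
    if 40 ≤ n then
      (c (n % 5))⁻¹ * (x n - ∑ m ∈ (Finset.range n).attach,
        ddA c E x m * E ((m : ℕ) % 5) (n - (m : ℕ) + (20 + 6 * ((m : ℕ) % 5))))
    else 0
  decreasing_by exact Finset.mem_range.mp m.2

lemma ddA_zero (c : ℕ → k) (E : ℕ → ℕ → k) (x : ℕ → k) {n : ℕ} (h : ¬ 40 ≤ n) :
    ddA c E x n = 0 := by rw [ddA, if_neg h]

lemma ddA_spec (c : ℕ → k) (E : ℕ → ℕ → k) (x : ℕ → k) {n : ℕ} (h : 40 ≤ n) :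
    ddA c E x n = (c (n % 5))⁻¹ * (x n - ∑ m ∈ Finset.range n,
        ddA c E x m * E (m % 5) (n - m + (20 + 6 * (m % 5)))) := by
  rw [ddA, if_pos h, Finset.sum_attach (Finset.range n)
    (fun m => ddA c E x m * E (m % 5) (n - m + (20 + 6 * (m % 5))))]

lemma tail_rep (e : ℕ → KK)
    (he0 : ∀ r < 5, ∀ j < 20 + 6 * r, coeff j (e r) = 0)
    (he1 : ∀ r < 5, coeff (20 + 6 * r) (e r) ≠ 0)
    (x : KK) (hx : ∀ n < 40, coeff n x = 0) :
    ∃ a : ℕ → KK, (∀ r l, ¬ (5 ∣ l) → coeff l (a r) = 0) ∧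
      x = ∑ r ∈ Finset.range 5, a r * e r := by
  set c : ℕ → k := fun r => coeff (20 + 6 * r) (e r) with hc
  set d : ℕ → k := ddA c (fun r j => coeff j (e r)) (fun n => coeff n x) with hd
  have hdzero : ∀ {m : ℕ}, m < 40 → d m = 0 := fun {m} hm => ddA_zero _ _ _ (by omega)
  refine ⟨fun r => PowerSeries.mk fun l => if l % 5 = 0 then d (l + (20 + 6 * r)) else 0,
    ?_, ?_⟩
  · intro r l hl
    simp only [coeff_mk]
    rw [if_neg (by omega)]
  · ext n
    rw [map_sum]
    have step2 : ∀ r ∈ Finset.range 5,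
        coeff n (PowerSeries.mk (fun l => if l % 5 = 0 then d (l + (20 + 6 * r)) else 0) * e r)
        = ∑ m ∈ (Finset.range (n+1)).filter (fun m => m % 5 = r),
            (fun m => d m * coeff (n - m + (20 + 6 * (m % 5))) (e (m % 5))) m := by
      intro r hr
      have hr5 : r < 5 := Finset.mem_range.mp hr
      rw [coeff_mul, Finset.Nat.sum_antidiagonal_eq_sum_range_succ
        (fun i j => coeff i (PowerSeries.mk (fun l => if l % 5 = 0 then d (l + (20 + 6 * r)) else 0)) * coeff j (e r))]
      simp only [coeff_mk, ite_mul, zero_mul]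
      rw [← Finset.sum_filter]
      have hL : ∑ i ∈ (Finset.range (n+1)).filter (fun i => i % 5 = 0),
            d (i + (20 + 6 * r)) * coeff (n - i) (e r)
          = ∑ i ∈ (Finset.range (n+1)).filter (fun i => i % 5 = 0 ∧ i + (20 + 6 * r) ≤ n),
            d (i + (20 + 6 * r)) * coeff (n - i) (e r) := by
        refine (Finset.sum_subset ?_ ?_).symm
        · intro i hi
          simp only [Finset.mem_filter, Finset.mem_range] at hi ⊢
          exact ⟨hi.1, hi.2.1⟩
        · intro i hi hni
          simp only [Finset.mem_filter, Finset.mem_range] at hi hni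
          have h1 : ¬ (i + (20 + 6 * r) ≤ n) := fun hh => hni ⟨hi.1, hi.2, hh⟩
          rw [he0 r hr5 (n - i) (by omega), mul_zero]
      have hR : ∑ m ∈ (Finset.range (n+1)).filter (fun m => m % 5 = r),
            d m * coeff (n - m + (20 + 6 * (m % 5))) (e (m % 5))
          = ∑ m ∈ (Finset.range (n+1)).filter (fun m => m % 5 = r ∧ 20 + 6 * r ≤ m),
            d m * coeff (n - m + (20 + 6 * (m % 5))) (e (m % 5)) := by
        refine (Finset.sum_subset ?_ ?_).symm
        · intro m hm
          simp only [Finset.mem_filter, Finset.mem_range] at hm ⊢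
          exact ⟨hm.1, hm.2.1⟩
        · intro m hm hnm
          simp only [Finset.mem_filter, Finset.mem_range] at hm hnm
          have h1 : ¬ (20 + 6 * r ≤ m) := fun hh => hnm ⟨hm.1, hm.2, hh⟩
          have hm40 : m < 40 := by
            rcases hm with ⟨hm1, hm2⟩
            by_contra hge
            omega
          rw [hdzero hm40, zero_mul]
      rw [hL, hR]
      refine Finset.sum_nbij' (fun i => i + (20 + 6 * r)) (fun m => m - (20 + 6 * r))
        ?_ ?_ ?_ ?_ ?_
      · intro i hi
        simp only [Finset.mem_filter, Finset.mem_range] at hi ⊢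
        obtain ⟨h1, h2, h3⟩ := hi
        refine ⟨by omega, by omega, by omega⟩
      · intro m hm
        simp only [Finset.mem_filter, Finset.mem_range] at hm ⊢
        obtain ⟨h1, h2, h3⟩ := hm
        refine ⟨by omega, by omega, by omega⟩
      · intro i _
        omega
      · intro m hm
        simp only [Finset.mem_filter, Finset.mem_range] at hm
        obtain ⟨h1, h2, h3⟩ := hm
        omega
      · intro i hi
        simp only [Finset.mem_filter, Finset.mem_range] at hi
        obtain ⟨h1, h2, h3⟩ := hi
        show d (i + (20 + 6 * r)) * coeff (n - i) (e r)
          = d (i + (20 + 6 * r)) * coeff (n - (i + (20 + 6 * r)) + (20 + 6 * ((i + (20 + 6 * r)) % 5))) (e ((i + (20 + 6 * r)) % 5))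
        have h5 : (i + (20 + 6 * r)) % 5 = r := by omega
        have harg : n - (i + (20 + 6 * r)) + (20 + 6 * r) = n - i := by omega
        rw [h5, harg]
    rw [Finset.sum_congr rfl step2,
      Finset.sum_fiberwise_of_maps_to (fun m hm => Finset.mem_range.mpr (by omega))
        (fun m => d m * coeff (n - m + (20 + 6 * (m % 5))) (e (m % 5)))]
    by_cases h40 : 40 ≤ n
    · rw [Finset.sum_range_succ]
      have hdn : d n = (c (n % 5))⁻¹ * ((coeff n x) - ∑ m ∈ Finset.range n,
          d m * coeff (n - m + (20 + 6 * (m % 5))) (e (m % 5))) := ddA_spec _ _ _ h40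
      have hcn : c (n % 5) ≠ 0 := he1 (n % 5) (by omega)
      rw [hdn]
      have hnn : n - n + (20 + 6 * (n % 5)) = 20 + 6 * (n % 5) := by omega
      rw [hnn]
      have hcc : coeff (20 + 6 * (n % 5)) (e (n % 5)) = c (n % 5) := rfl
      rw [hcc]
      field_simp
      ring
    · rw [Finset.sum_eq_zero (fun m hm => by
        rw [hdzero (by simp only [Finset.mem_range] at hm; omega), zero_mul]),
        hx n (by omega)]

end UlrichAux


section UlrichAux2

open Finset

variable {k : Type*} [Field k]

local notation "HH" => AddSubmonoid.closure ({5, 11} : Set ℕ)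
local notation "KK" => PowerSeries k

lemma mul_coeff_lt20 (p : A511 k) (x : KK) (hx0 : ∀ j < 20, coeff j x = 0)
    {n : ℕ} (hn : n < 20) : coeff n ((p : KK) * x) = 0 := by
  rw [coeff_mul_support (p:KK) x n ∅ (Finset.empty_subset _)
    (fun i hi _ => Or.inr (hx0 _ (by omega))), Finset.sum_empty]

lemma mul_coeff20 (p : A511 k) (x : KK) (hx0 : ∀ j < 20, coeff j x = 0) :
    coeff 20 ((p : KK) * x) = constantCoeff (p:KK) * coeff 20 x := by
  rw [coeff_mul_support (p:KK) x 20 {0} (by intro i hi; simp_all) (fun i hi his => by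
    simp only [Finset.mem_range] at hi
    simp only [Finset.mem_singleton] at his
    exact Or.inr (hx0 _ (by omega)))]
  simp [PowerSeries.coeff_zero_eq_constantCoeff]

lemma mul_coeff21 (p : A511 k) (x : KK) (hx0 : ∀ j < 20, coeff j x = 0) :
    coeff 21 ((p : KK) * x) = constantCoeff (p:KK) * coeff 21 x := by
  rw [coeff_mul_support (p:KK) x 21 {0} (by intro i hi; simp_all) (fun i hi his => by
    simp only [Finset.mem_range] at hi
    simp only [Finset.mem_singleton] at his
    rcases Nat.lt_or_ge i 2 with h | h
    · exact Or.inl (coeffA_zero p (by omega) (by omega))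
    · exact Or.inr (hx0 _ (by omega)))]
  simp [PowerSeries.coeff_zero_eq_constantCoeff]

lemma mul_coeff22 (p : A511 k) (x : KK) (hx0 : ∀ j < 20, coeff j x = 0) :
    coeff 22 ((p : KK) * x) = constantCoeff (p:KK) * coeff 22 x := by
  rw [coeff_mul_support (p:KK) x 22 {0} (by intro i hi; simp_all) (fun i hi his => by
    simp only [Finset.mem_range] at hi
    simp only [Finset.mem_singleton] at his
    rcases Nat.lt_or_ge i 3 with h | h
    · exact Or.inl (coeffA_zero p (by omega) (by omega))
    · exact Or.inr (hx0 _ (by omega)))]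
  simp [PowerSeries.coeff_zero_eq_constantCoeff]

lemma mul_coeff25 (p : A511 k) (x : KK) (hx0 : ∀ j < 20, coeff j x = 0) :
    coeff 25 ((p : KK) * x)
      = constantCoeff (p:KK) * coeff 25 x + coeff 5 (p:KK) * coeff 20 x := by
  rw [coeff_mul_support (p:KK) x 25 {0, 5} (by intro i hi; simp_all; omega) (fun i hi his => by
    simp only [Finset.mem_range] at hi
    simp only [Finset.mem_insert, Finset.mem_singleton] at his
    rcases Nat.lt_or_ge i 6 with h | h
    · exact Or.inl (coeffA_zero p (by omega) (by omega))
    · exact Or.inr (hx0 _ (by omega)))]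
  rw [Finset.sum_pair (by norm_num)]
  simp [PowerSeries.coeff_zero_eq_constantCoeff]

lemma mul_coeff26 (p : A511 k) (x : KK) (hx0 : ∀ j < 20, coeff j x = 0) :
    coeff 26 ((p : KK) * x)
      = constantCoeff (p:KK) * coeff 26 x + coeff 5 (p:KK) * coeff 21 x := by
  rw [coeff_mul_support (p:KK) x 26 {0, 5} (by intro i hi; simp_all; omega) (fun i hi his => by
    simp only [Finset.mem_range] at hi
    simp only [Finset.mem_insert, Finset.mem_singleton] at his
    rcases Nat.lt_or_ge i 7 with h | h
    · exact Or.inl (coeffA_zero p (by omega) (by omega))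
    · exact Or.inr (hx0 _ (by omega)))]
  rw [Finset.sum_pair (by norm_num)]
  simp [PowerSeries.coeff_zero_eq_constantCoeff]

lemma mul_coeff27 (p : A511 k) (x : KK) (hx0 : ∀ j < 20, coeff j x = 0) :
    coeff 27 ((p : KK) * x)
      = constantCoeff (p:KK) * coeff 27 x + coeff 5 (p:KK) * coeff 22 x := by
  rw [coeff_mul_support (p:KK) x 27 {0, 5} (by intro i hi; simp_all; omega) (fun i hi his => by
    simp only [Finset.mem_range] at hi
    simp only [Finset.mem_insert, Finset.mem_singleton] at his
    rcases Nat.lt_or_ge i 8 with h | h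
    · exact Or.inl (coeffA_zero p (by omega) (by omega))
    · exact Or.inr (hx0 _ (by omega)))]
  rw [Finset.sum_pair (by norm_num)]
  simp [PowerSeries.coeff_zero_eq_constantCoeff]

lemma mul_coeff_lt26 (q : A511 k) (x : KK) (hx0 : ∀ j < 26, coeff j x = 0)
    {n : ℕ} (hn : n < 26) : coeff n ((q : KK) * x) = 0 := by
  rw [coeff_mul_support (q:KK) x n ∅ (Finset.empty_subset _)
    (fun i hi _ => Or.inr (hx0 _ (by omega))), Finset.sum_empty]

lemma mul_coeff26' (q : A511 k) (x : KK) (hx0 : ∀ j < 26, coeff j x = 0) :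
    coeff 26 ((q : KK) * x) = constantCoeff (q:KK) * coeff 26 x := by
  rw [coeff_mul_support (q:KK) x 26 {0} (by intro i hi; simp_all) (fun i hi his => by
    simp only [Finset.mem_range] at hi
    simp only [Finset.mem_singleton] at his
    exact Or.inr (hx0 _ (by omega)))]
  simp [PowerSeries.coeff_zero_eq_constantCoeff]

lemma mul_coeff27' (q : A511 k) (x : KK) (hx0 : ∀ j < 26, coeff j x = 0) :
    coeff 27 ((q : KK) * x) = constantCoeff (q:KK) * coeff 27 x := by
  rw [coeff_mul_support (q:KK) x 27 {0} (by intro i hi; simp_all) (fun i hi his => by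
    simp only [Finset.mem_range] at hi
    simp only [Finset.mem_singleton] at his
    rcases Nat.lt_or_ge i 2 with h | h
    · exact Or.inl (coeffA_zero q (by omega) (by omega))
    · exact Or.inr (hx0 _ (by omega)))]
  simp [PowerSeries.coeff_zero_eq_constantCoeff]

lemma mul_coeffm_lt25 (a : A511 k) (ha0 : constantCoeff (a:KK) = 0) (x : KK)
    (hx0 : ∀ j < 20, coeff j x = 0) {n : ℕ} (hn : n < 25) :
    coeff n ((a : KK) * x) = 0 := by
  rw [coeff_mul_support (a:KK) x n ∅ (Finset.empty_subset _) (fun i hi _ => by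
    simp only [Finset.mem_range] at hi
    rcases Nat.lt_or_ge i 5 with h | h
    · rcases Nat.eq_zero_or_pos i with h0 | h0
      · subst h0
        exact Or.inl (by rw [PowerSeries.coeff_zero_eq_constantCoeff]; exact ha0)
      · exact Or.inl (coeffA_zero a (by omega) (by omega))
    · exact Or.inr (hx0 _ (by omega))), Finset.sum_empty]

lemma mul_coeffm25 (a : A511 k) (ha0 : constantCoeff (a:KK) = 0) (x : KK)
    (hx0 : ∀ j < 20, coeff j x = 0) :
    coeff 25 ((a : KK) * x) = coeff 5 (a:KK) * coeff 20 x := by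
  rw [coeff_mul_support (a:KK) x 25 {5} (by intro i hi; simp_all) (fun i hi his => by
    simp only [Finset.mem_range] at hi
    simp only [Finset.mem_singleton] at his
    rcases Nat.lt_or_ge i 5 with h | h
    · rcases Nat.eq_zero_or_pos i with h0 | h0
      · subst h0
        exact Or.inl (by rw [PowerSeries.coeff_zero_eq_constantCoeff]; exact ha0)
      · exact Or.inl (coeffA_zero a (by omega) (by omega))
    · exact Or.inr (hx0 _ (by omega)))]
  simp

lemma mul_coeffm26 (a : A511 k) (ha0 : constantCoeff (a:KK) = 0) (x : KK)
    (hx0 : ∀ j < 20, coeff j x = 0) :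
    coeff 26 ((a : KK) * x) = coeff 5 (a:KK) * coeff 21 x := by
  rw [coeff_mul_support (a:KK) x 26 {5} (by intro i hi; simp_all) (fun i hi his => by
    simp only [Finset.mem_range] at hi
    simp only [Finset.mem_singleton] at his
    rcases Nat.lt_or_ge i 7 with h | h
    · rcases Nat.eq_zero_or_pos i with h0 | h0
      · subst h0
        exact Or.inl (by rw [PowerSeries.coeff_zero_eq_constantCoeff]; exact ha0)
      · exact Or.inl (coeffA_zero a (by omega) (by omega))
    · exact Or.inr (hx0 _ (by omega)))]
  simp

end UlrichAux2


section UlrichAux3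

open Finset

variable {k : Type*} [Field k]

local notation "HH" => AddSubmonoid.closure ({5, 11} : Set ℕ)
local notation "KK" => PowerSeries k

variable {I : Ideal (A511 k)} {f g : A511 k}

lemma I_coeff_data (hI : I = Ideal.span {f, g})
    (hf0 : ∀ j < 20, coeff j (f:KK) = 0) (hg0 : ∀ j < 26, coeff j (g:KK) = 0)
    {y : A511 k} (hy : y ∈ I) :
    ∃ p0 p5 q0 : k,
      coeff 20 (y:KK) = p0 * coeff 20 (f:KK) ∧
      coeff 21 (y:KK) = p0 * coeff 21 (f:KK) ∧
      coeff 22 (y:KK) = p0 * coeff 22 (f:KK) ∧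
      coeff 25 (y:KK) = p0 * coeff 25 (f:KK) + p5 * coeff 20 (f:KK) ∧
      coeff 26 (y:KK) = p0 * coeff 26 (f:KK) + p5 * coeff 21 (f:KK) + q0 * coeff 26 (g:KK) ∧
      coeff 27 (y:KK) = p0 * coeff 27 (f:KK) + p5 * coeff 22 (f:KK) + q0 * coeff 27 (g:KK) := by
  rw [hI] at hy
  obtain ⟨p, q, hpq⟩ := Ideal.mem_span_pair.mp hy
  have hval : (y:KK) = (p:KK) * (f:KK) + (q:KK) * (g:KK) := by
    rw [← hpq]; push_cast; ring
  refine ⟨constantCoeff (p:KK), coeff 5 (p:KK), constantCoeff (q:KK), ?_, ?_, ?_, ?_, ?_, ?_⟩ <;>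
    rw [hval, map_add]
  · rw [mul_coeff20 p _ hf0, mul_coeff_lt26 q _ hg0 (by norm_num), add_zero]
  · rw [mul_coeff21 p _ hf0, mul_coeff_lt26 q _ hg0 (by norm_num), add_zero]
  · rw [mul_coeff22 p _ hf0, mul_coeff_lt26 q _ hg0 (by norm_num), add_zero]
  · rw [mul_coeff25 p _ hf0, mul_coeff_lt26 q _ hg0 (by norm_num), add_zero]
  · rw [mul_coeff26 p _ hf0, mul_coeff26' q _ hg0]
  · rw [mul_coeff27 p _ hf0, mul_coeff27' q _ hg0]

lemma I_vanish20 (hI : I = Ideal.span {f, g})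
    (hf0 : ∀ j < 20, coeff j (f:KK) = 0) (hg0 : ∀ j < 26, coeff j (g:KK) = 0)
    {y : A511 k} (hy : y ∈ I) : ∀ n < 20, coeff n (y:KK) = 0 := by
  rw [hI] at hy
  obtain ⟨p, q, hpq⟩ := Ideal.mem_span_pair.mp hy
  have hval : (y:KK) = (p:KK) * (f:KK) + (q:KK) * (g:KK) := by
    rw [← hpq]; push_cast; ring
  intro n hn
  rw [hval, map_add, mul_coeff_lt20 p _ hf0 hn, mul_coeff_lt26 q _ hg0 (by omega), add_zero]

lemma I_rel21 (hI : I = Ideal.span {f, g})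
    (hf0 : ∀ j < 20, coeff j (f:KK) = 0) (hg0 : ∀ j < 26, coeff j (g:KK) = 0)
    {y : A511 k} (hy : y ∈ I) :
    coeff 20 (f:KK) * coeff 21 (y:KK) = coeff 21 (f:KK) * coeff 20 (y:KK) := by
  obtain ⟨p0, p5, q0, h20, h21, _⟩ := I_coeff_data hI hf0 hg0 hy
  rw [h20, h21]; ring

lemma I_struct (hI : I = Ideal.span {f, g})
    (hf0 : ∀ j < 20, coeff j (f:KK) = 0) (hg0 : ∀ j < 26, coeff j (g:KK) = 0)
    (hc : coeff 20 (f:KK) ≠ 0) (hd : coeff 26 (g:KK) ≠ 0)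
    {y : A511 k} (hy : y ∈ I) (h20 : coeff 20 (y:KK) = 0) :
    coeff 21 (y:KK) = 0 ∧ coeff 22 (y:KK) = 0 ∧
      (coeff 25 (y:KK) = 0 → coeff 26 (y:KK) = 0 → coeff 27 (y:KK) = 0) := by
  obtain ⟨p0, p5, q0, h20', h21, h22, h25, h26, h27⟩ := I_coeff_data hI hf0 hg0 hy
  have hp0 : p0 = 0 := by
    rw [h20'] at h20
    rcases mul_eq_zero.mp h20 with h | h
    · exact h
    · exact absurd h hc
  subst hp0
  simp only [zero_mul, zero_add] at h21 h22 h25 h26 h27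
  refine ⟨h21, h22, fun h25' h26' => ?_⟩
  have hp5 : p5 = 0 := by
    rw [h25] at h25'
    rcases mul_eq_zero.mp h25' with h | h
    · exact h
    · exact absurd h hc
  subst hp5
  simp only [zero_mul, zero_add] at h26 h27
  have hq0 : q0 = 0 := by
    rw [h26] at h26'
    rcases mul_eq_zero.mp h26' with h | h
    · exact h
    · exact absurd h hd
  subst hq0
  simpa using h27

lemma mI_facts (hI : I = Ideal.span {f, g})
    (hf0 : ∀ j < 20, coeff j (f:KK) = 0) (hg0 : ∀ j < 26, coeff j (g:KK) = 0)
    {x : A511 k} (hx : x ∈ maximalIdealOf k (A511 k) * I) :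
    (∀ n < 25, coeff n (x:KK) = 0) ∧
      coeff 20 (f:KK) * coeff 26 (x:KK) = coeff 21 (f:KK) * coeff 25 (x:KK) := by
  refine Submodule.mul_induction_on hx ?_ ?_
  · intro a ha y hy
    have ha0 : constantCoeff (a:KK) = 0 := mem_maximalIdealOf_iff.mp ha
    have hy0 : ∀ n < 20, coeff n (y:KK) = 0 := I_vanish20 hI hf0 hg0 hy
    have hval : ((a * y : A511 k):KK) = (a:KK) * (y:KK) := by push_cast; ring
    constructor
    · intro n hn
      rw [hval]
      exact mul_coeffm_lt25 a ha0 _ hy0 hn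
    · rw [hval, mul_coeffm25 a ha0 _ hy0, mul_coeffm26 a ha0 _ hy0]
      have hr := I_rel21 hI hf0 hg0 hy
      calc coeff 20 (f:KK) * (coeff 5 (a:KK) * coeff 21 (y:KK))
          = coeff 5 (a:KK) * (coeff 20 (f:KK) * coeff 21 (y:KK)) := by ring
        _ = coeff 5 (a:KK) * (coeff 21 (f:KK) * coeff 20 (y:KK)) := by rw [hr]
        _ = coeff 21 (f:KK) * (coeff 5 (a:KK) * coeff 20 (y:KK)) := by ring
  · intro x y hx' hy'
    have hval : ((x + y : A511 k):KK) = (x:KK) + (y:KK) := rfl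
    constructor
    · intro n hn
      rw [hval, map_add, hx'.1 n hn, hy'.1 n hn, add_zero]
    · rw [hval, map_add, map_add, mul_add, mul_add, hx'.2, hy'.2]

lemma decomp_mu (hI : I = Ideal.span {f, g})
    (hf0 : ∀ j < 20, coeff j (f:KK) = 0) (hg0 : ∀ j < 26, coeff j (g:KK) = 0)
    (hc : coeff 20 (f:KK) ≠ 0) (hfI : f ∈ I) (hgI : g ∈ I)
    {y : A511 k} (hy : y ∈ I) (h20 : coeff 20 (y:KK) = 0) :
    ∃ μ : k, y - algebraMap k (A511 k) μ * g ∈ maximalIdealOf k (A511 k) * I := by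
  have hy' := hy
  rw [hI] at hy'
  obtain ⟨p, q, hpq⟩ := Ideal.mem_span_pair.mp hy'
  have hval : (y:KK) = (p:KK) * (f:KK) + (q:KK) * (g:KK) := by
    rw [← hpq]; push_cast; ring
  have h20' : constantCoeff (p:KK) * coeff 20 (f:KK) = 0 := by
    have hsum : coeff 20 ((p:KK) * (f:KK)) + coeff 20 ((q:KK) * (g:KK)) = 0 := by
      rw [← map_add, ← hval]; exact h20
    rw [mul_coeff20 p _ hf0, mul_coeff_lt26 q _ hg0 (by norm_num), add_zero] at hsum
    exact hsum
  have hp0 : constantCoeff (p:KK) = 0 := by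
    rcases mul_eq_zero.mp h20' with h | h
    · exact h
    · exact absurd h hc
  refine ⟨constantCoeff (q:KK), ?_⟩
  have heq : y - algebraMap k (A511 k) (constantCoeff (q:KK)) * g
      = p * f + (q - algebraMap k (A511 k) (constantCoeff (q:KK))) * g := by
    rw [← hpq]; ring
  rw [heq]
  refine Submodule.add_mem _ (Ideal.mul_mem_mul ?_ hfI) (Ideal.mul_mem_mul ?_ hgI)
  · rw [mem_maximalIdealOf_iff]
    exact hp0
  · rw [mem_maximalIdealOf_iff]
    have hcoe : ((q - algebraMap k (A511 k) (constantCoeff (q:KK)) : A511 k) : KK)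
        = (q:KK) - PowerSeries.C (constantCoeff (q:KK)) := by
      push_cast
      rfl
    rw [hcoe, map_sub, PowerSeries.constantCoeff_C, sub_self]

lemma clean_lemma
    (hC : ∀ x : A511 k, (∀ n < 40, coeff n (x:KK) = 0) → x ∈ I)
    (hE : ∀ s ∈ ({25,26,30,31,32,35,36,37,38} : Finset ℕ),
      ∃ E, E ∈ I ∧ (∀ j < s, coeff j ((E : A511 k):KK) = 0) ∧ coeff s ((E : A511 k):KK) ≠ 0) :
    ∀ j s, s + j = 40 → 21 ≤ s → ∀ x : A511 k, (∀ n < s, coeff n (x:KK) = 0) →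
      ∃ z, z ∈ I ∧ ∀ n, n ∉ ({21,22,27,33} : Finset ℕ) → coeff n ((x:KK) - (z:KK)) = 0 := by
  intro j
  induction j with
  | zero =>
    intro s hs h21 x hx
    exact ⟨x, hC x (fun n hn => hx n (by omega)), fun n _ => by rw [sub_self, map_zero]⟩
  | succ j ih =>
    intro s hs h21 x hx
    by_cases hD : s = 21 ∨ s = 22 ∨ s = 27 ∨ s = 33
    · have hsH : s ∈ HH := by
        rcases hD with h | h | h | h <;> subst h
        · exact mem511 2 1 (by norm_num)
        · exact mem511 0 2 (by norm_num)
        · exact mem511 1 2 (by norm_num)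
        · exact mem511 0 3 (by norm_num)
      set Xs : A511 k := ⟨(X : KK) ^ s, X_pow_mem k hsH⟩ with hXs
      set x' : A511 k := x - coeff s (x:KK) • Xs with hx'def
      have hx'val : (x' : KK) = (x:KK) - coeff s (x:KK) • (X:KK) ^ s := rfl
      have hx'0 : ∀ n < s + 1, coeff n (x':KK) = 0 := by
        intro n hn
        rw [hx'val, map_sub, map_smul, smul_eq_mul, PowerSeries.coeff_X_pow]
        by_cases hns : n = s
        · subst hns
          rw [if_pos rfl, mul_one, sub_self]
        · rw [if_neg hns, mul_zero, hx n (by omega), sub_zero]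
      obtain ⟨z, hzI, hzgood⟩ := ih (s+1) (by omega) (by omega) x' hx'0
      refine ⟨z, hzI, fun n hn => ?_⟩
      have hns : n ≠ s := by
        simp only [Finset.mem_insert, Finset.mem_singleton] at hn
        rcases hD with h | h | h | h <;> omega
      have hsplit : (x:KK) - (z:KK) = ((x':KK) - (z:KK)) + coeff s (x:KK) • (X:KK) ^ s := by
        rw [hx'val]; ring
      rw [hsplit, map_add, hzgood n hn, zero_add, map_smul, smul_eq_mul,
        PowerSeries.coeff_X_pow, if_neg hns, mul_zero]
    · by_cases hO : s ∈ ({25,26,30,31,32,35,36,37,38} : Finset ℕ)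
      · obtain ⟨E, hEI, hE0, hEs⟩ := hE s hO
        set α : k := coeff s (x:KK) * (coeff s (E:KK))⁻¹ with hα
        set x' : A511 k := x - α • E with hx'def
        have hx'val : (x':KK) = (x:KK) - α • (E:KK) := rfl
        have hx'0 : ∀ n < s + 1, coeff n (x':KK) = 0 := by
          intro n hn
          rw [hx'val, map_sub, map_smul, smul_eq_mul]
          by_cases hns : n = s
          · subst hns
            rw [hα]
            field_simp
            ring
          · rw [hx n (by omega), hE0 n (by omega), mul_zero, sub_zero]
        obtain ⟨z, hzI, hzgood⟩ := ih (s+1) (by omega) (by omega) x' hx'0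
        refine ⟨z + α • E, ?_, fun n hn => ?_⟩
        · refine Submodule.add_mem _ hzI ?_
          rw [Algebra.smul_def]
          exact I.mul_mem_left _ hEI
        · have hsplit : (x:KK) - ((z + α • E : A511 k):KK) = (x':KK) - (z:KK) := by
            have hcoe : ((z + α • E : A511 k):KK) = (z:KK) + α • (E:KK) := rfl
            rw [hcoe, hx'val]; ring
          rw [hsplit]
          exact hzgood n hn
      · have hsH : s ∉ HH := by
          intro hcon
          obtain ⟨a, b, hab⟩ := memHH_iff.mp hcon
          simp only [Finset.mem_insert, Finset.mem_singleton] at hO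
          have ha : a ≤ 7 := by omega
          have hb : b ≤ 3 := by omega
          interval_cases a <;> interval_cases b <;> omega
        have hx0' : ∀ n < s + 1, coeff n (x:KK) = 0 := by
          intro n hn
          by_cases hns : n = s
          · subst hns
            by_contra hcc
            exact hsH (x.2 _ hcc)
          · exact hx n (by omega)
        exact ih (s+1) (by omega) (by omega) x hx0'

lemma tail_mem (E : ℕ → A511 k) (hEI : ∀ r < 5, E r ∈ I)
    (hord : ∀ r < 5, PowerSeries.order ((E r : A511 k):KK) = ((20 + 6*r : ℕ) : ℕ∞)) :
    ∀ x : A511 k, (∀ n < 40, coeff n (x:KK) = 0) → x ∈ I := by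
  intro x hx
  obtain ⟨a, ha5, hsum⟩ := tail_rep (fun r => ((E r) : KK))
    (fun r hr => (ordElt (hord r hr)).1) (fun r hr => (ordElt (hord r hr)).2) (x:KK) hx
  have haA : ∀ r, a r ∈ A511 k := by
    intro r n hn
    have h5 : 5 ∣ n := by
      by_contra hdd
      exact hn (ha5 r n hdd)
    exact mem511 (n / 5) 0 (by omega)
  have hyI : (∑ r ∈ Finset.range 5, (⟨a r, haA r⟩ : A511 k) * E r) ∈ I :=
    Submodule.sum_mem _ (fun r hr => I.mul_mem_left _ (hEI r (Finset.mem_range.mp hr)))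
  have hxy : x = ∑ r ∈ Finset.range 5, (⟨a r, haA r⟩ : A511 k) * E r := by
    apply Subtype.ext
    have hcoe : ((∑ r ∈ Finset.range 5, (⟨a r, haA r⟩ : A511 k) * E r : A511 k) : KK)
        = ∑ r ∈ Finset.range 5, a r * ((E r):KK) :=
      (AddSubmonoidClass.coe_finset_sum _ _).trans (Finset.sum_congr rfl (fun r _ => rfl))
    rw [hcoe]
    exact hsum
  rw [hxy]
  exact hyI

end UlrichAux3

set_option maxHeartbeats 4000000 in
/-- an Ulrich ideal of `A = k⟦t⁵,t¹¹⟧` with data `(a,b) = (20,26)` has the form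
`(t²⁰ + α₁t²¹ + α₂t²² + α₃t²⁷ + α₄t³³, t²⁶ + β₁t²⁷ + β₂t³³)` and contains `t³² + εt³³`. -/
theorem ulrich_ideal_511_orders_20_26_form (I : Ideal (A511 k)) (f g : A511 k)
    (hU : IsUlrichIdeal k (A511 k) I) (hf : f ∈ I) (hg : g ∈ I)
    (hI : I = Ideal.span {f, g}) (hred : I ^ 2 = Ideal.span {f} * I)
    (hof : order (f : PowerSeries k) = 20) (hog : order (g : PowerSeries k) = 26) :
    ∃ α₁ α₂ α₃ α₄ β₁ β₂ ε : k,
      I = Ideal.span {genF k α₁ α₂ α₃ α₄, genG k β₁ β₂} ∧ elt32 k ε ∈ I := by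
  classical
  -- basic order facts
  have hof' : PowerSeries.order (f : PowerSeries k) = ((20:ℕ) : ℕ∞) := by exact_mod_cast hof
  have hog' : PowerSeries.order (g : PowerSeries k) = ((26:ℕ) : ℕ∞) := by exact_mod_cast hog
  obtain ⟨hf0, hfc⟩ := ordElt hof'
  obtain ⟨hg0, hgc⟩ := ordElt hog'
  -- the auxiliary elements h, w, u of I
  have hgg : (g * g : A511 k) ∈ Ideal.span {f} * I := by
    rw [← hred, pow_two]
    exact Ideal.mul_mem_mul hg hg
  obtain ⟨h, hhI, hfh⟩ := Ideal.mem_span_singleton_mul.mp hgg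
  have hvalfh : (f : PowerSeries k) * (h : PowerSeries k) = (g : PowerSeries k) * g := by
    have := congrArg Subtype.val hfh
    push_cast at this
    exact this
  have hoh : PowerSeries.order (h : PowerSeries k) = ((32:ℕ) : ℕ∞) := by
    have h1 := congrArg PowerSeries.order hvalfh
    rw [PowerSeries.order_mul, PowerSeries.order_mul, hof', hog'] at h1
    have h2 : ((20:ℕ):ℕ∞) + PowerSeries.order (h : PowerSeries k) = ((52:ℕ):ℕ∞) := by
      rw [h1]; norm_cast
    simpa using order_add_eq_enat h2
  have hgh : (g * h : A511 k) ∈ Ideal.span {f} * I := by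
    rw [← hred, pow_two]
    exact Ideal.mul_mem_mul hg hhI
  obtain ⟨w, hwI, hfw⟩ := Ideal.mem_span_singleton_mul.mp hgh
  have hvalfw : (f : PowerSeries k) * (w : PowerSeries k) = (g : PowerSeries k) * h := by
    have := congrArg Subtype.val hfw
    push_cast at this
    exact this
  have how : PowerSeries.order (w : PowerSeries k) = ((38:ℕ) : ℕ∞) := by
    have h1 := congrArg PowerSeries.order hvalfw
    rw [PowerSeries.order_mul, PowerSeries.order_mul, hof', hog', hoh] at h1
    have h2 : ((20:ℕ):ℕ∞) + PowerSeries.order (w : PowerSeries k) = ((58:ℕ):ℕ∞) := by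
      rw [h1]; norm_cast
    simpa using order_add_eq_enat h2
  have hhh : (h * h : A511 k) ∈ Ideal.span {f} * I := by
    rw [← hred, pow_two]
    exact Ideal.mul_mem_mul hhI hhI
  obtain ⟨u, huI, hfu⟩ := Ideal.mem_span_singleton_mul.mp hhh
  have hvalfu : (f : PowerSeries k) * (u : PowerSeries k) = (h : PowerSeries k) * h := by
    have := congrArg Subtype.val hfu
    push_cast at this
    exact this
  have hou : PowerSeries.order (u : PowerSeries k) = ((44:ℕ) : ℕ∞) := by
    have h1 := congrArg PowerSeries.order hvalfu
    rw [PowerSeries.order_mul, PowerSeries.order_mul, hof', hoh] at h1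
    have h2 : ((20:ℕ):ℕ∞) + PowerSeries.order (u : PowerSeries k) = ((64:ℕ):ℕ∞) := by
      rw [h1]; norm_cast
    simpa using order_add_eq_enat h2
  obtain ⟨hh0, hhc⟩ := ordElt hoh
  -- the conductor-type containment
  have hC : ∀ x : A511 k, (∀ n < 40, coeff n (x : PowerSeries k) = 0) → x ∈ I := by
    apply tail_mem (fun r => if r = 0 then f else if r = 1 then g else if r = 2 then h
      else if r = 3 then w else u)
    · intro r hr
      interval_cases r
      · simpa using hf
      · simpa using hg
      · simpa using hhI
      · simpa using hwI
      · simpa using huI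
    · intro r hr
      interval_cases r
      · simpa using hof'
      · simpa using hog'
      · simpa using hoh
      · simpa using how
      · simpa using hou
  -- elements of prescribed orders for the cleaning procedure
  have mkE : ∀ (m : ℕ), m ∈ (AddSubmonoid.closure ({5,11} : Set ℕ)) → ∀ (y : A511 k), y ∈ I →
      ∀ (ny : ℕ), PowerSeries.order (y : PowerSeries k) = ((ny:ℕ):ℕ∞) →
      ∃ E, E ∈ I ∧ (∀ j < m + ny, coeff j ((E : A511 k) : PowerSeries k) = 0) ∧
        coeff (m + ny) ((E : A511 k) : PowerSeries k) ≠ 0 := by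
    intro m hm y hy ny hoy
    refine ⟨(⟨(X : PowerSeries k) ^ m, X_pow_mem k hm⟩ : A511 k) * y, I.mul_mem_left _ hy, ?_, ?_⟩
    · intro j hj
      refine (ordElt (n := m + ny) ?_).1 j hj
      have hv : (((⟨(X : PowerSeries k) ^ m, X_pow_mem k hm⟩ : A511 k) * y : A511 k) : PowerSeries k)
          = (X : PowerSeries k) ^ m * (y : PowerSeries k) := rfl
      rw [hv, PowerSeries.order_mul, PowerSeries.order_X_pow, hoy, ← Nat.cast_add]
    · refine (ordElt (n := m + ny) ?_).2
      have hv : (((⟨(X : PowerSeries k) ^ m, X_pow_mem k hm⟩ : A511 k) * y : A511 k) : PowerSeries k)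
          = (X : PowerSeries k) ^ m * (y : PowerSeries k) := rfl
      rw [hv, PowerSeries.order_mul, PowerSeries.order_X_pow, hoy, ← Nat.cast_add]
  have hE : ∀ s ∈ ({25,26,30,31,32,35,36,37,38} : Finset ℕ),
      ∃ E, E ∈ I ∧ (∀ j < s, coeff j ((E : A511 k) : PowerSeries k) = 0) ∧
        coeff s ((E : A511 k) : PowerSeries k) ≠ 0 := by
    intro s hs
    fin_cases hs
    · simpa using mkE 5 (mem511 1 0 (by norm_num)) f hf 20 hof'
    · simpa using mkE 0 (AddSubmonoid.zero_mem _) g hg 26 hog'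
    · simpa using mkE 10 (mem511 2 0 (by norm_num)) f hf 20 hof'
    · simpa using mkE 11 (mem511 0 1 (by norm_num)) f hf 20 hof'
    · simpa using mkE 0 (AddSubmonoid.zero_mem _) h hhI 32 hoh
    · simpa using mkE 15 (mem511 3 0 (by norm_num)) f hf 20 hof'
    · simpa using mkE 10 (mem511 2 0 (by norm_num)) g hg 26 hog'
    · simpa using mkE 5 (mem511 1 0 (by norm_num)) h hhI 32 hoh
    · simpa using mkE 0 (AddSubmonoid.zero_mem _) w hwI 38 how
  have hclean := clean_lemma hC hE
  -- normalize f
  set c : k := coeff 20 (f : PowerSeries k) with hcdef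
  set xf : A511 k := c⁻¹ • f - ⟨(X : PowerSeries k) ^ 20, X_pow_mem k (mem511 4 0 (by norm_num))⟩
    with hxfdef
  have hxfval : (xf : PowerSeries k) = c⁻¹ • (f : PowerSeries k) - (X : PowerSeries k) ^ 20 := rfl
  have hxf0 : ∀ n < 21, coeff n (xf : PowerSeries k) = 0 := by
    intro n hn
    rw [hxfval, map_sub, map_smul, smul_eq_mul, PowerSeries.coeff_X_pow]
    by_cases hn20 : n = 20
    · subst hn20
      rw [if_pos rfl, inv_mul_cancel₀ hfc, sub_self]
    · rw [if_neg hn20, hf0 n (by omega), mul_zero, sub_zero]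
  obtain ⟨zf, hzfI, hzfgood⟩ := hclean 19 21 (by norm_num) (by norm_num) xf hxf0
  set yf : PowerSeries k := (xf : PowerSeries k) - (zf : PowerSeries k) with hyfdef
  have hgenF : genF k (coeff 21 yf) (coeff 22 yf) (coeff 27 yf) (coeff 33 yf)
      = c⁻¹ • f - zf := by
    apply Subtype.ext
    have hR : ((c⁻¹ • f - zf : A511 k) : PowerSeries k) = (X : PowerSeries k) ^ 20 + yf := by
      have hco : ((c⁻¹ • f - zf : A511 k) : PowerSeries k)
          = c⁻¹ • (f : PowerSeries k) - (zf : PowerSeries k) := rfl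
      rw [hco, hyfdef, hxfval]; ring
    rw [hR]
    show (X : PowerSeries k) ^ 20 + coeff 21 yf • (X : PowerSeries k) ^ 21
        + coeff 22 yf • (X : PowerSeries k) ^ 22 + coeff 27 yf • (X : PowerSeries k) ^ 27
        + coeff 33 yf • (X : PowerSeries k) ^ 33 = (X : PowerSeries k) ^ 20 + yf
    ext n
    simp only [map_add, map_smul, smul_eq_mul, PowerSeries.coeff_X_pow]
    by_cases e20 : n = 20
    · subst e20
      have : coeff 20 yf = 0 := hzfgood 20 (by decide)
      simp [this]
    · by_cases e21 : n = 21
      · subst e21; simp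
      · by_cases e22 : n = 22
        · subst e22; simp
        · by_cases e27 : n = 27
          · subst e27; simp
          · by_cases e33 : n = 33
            · subst e33; simp
            · have : coeff n yf = 0 := hzfgood n (by
                simp only [Finset.mem_insert, Finset.mem_singleton]
                tauto)
              simp [e20, e21, e22, e27, e33, this]
  have hFI : genF k (coeff 21 yf) (coeff 22 yf) (coeff 27 yf) (coeff 33 yf) ∈ I := by
    rw [hgenF]
    refine Submodule.sub_mem _ ?_ hzfI
    rw [Algebra.smul_def]
    exact I.mul_mem_left _ hf
  -- normalize g
  set d : k := coeff 26 (g : PowerSeries k) with hddef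
  set xg : A511 k := d⁻¹ • g - ⟨(X : PowerSeries k) ^ 26, X_pow_mem k (mem511 3 1 (by norm_num))⟩
    with hxgdef
  have hxgval : (xg : PowerSeries k) = d⁻¹ • (g : PowerSeries k) - (X : PowerSeries k) ^ 26 := rfl
  have hxg0 : ∀ n < 27, coeff n (xg : PowerSeries k) = 0 := by
    intro n hn
    rw [hxgval, map_sub, map_smul, smul_eq_mul, PowerSeries.coeff_X_pow]
    by_cases hn26 : n = 26
    · subst hn26
      rw [if_pos rfl, inv_mul_cancel₀ hgc, sub_self]
    · rw [if_neg hn26, hg0 n (by omega), mul_zero, sub_zero]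
  obtain ⟨zg, hzgI, hzggood⟩ := hclean 13 27 (by norm_num) (by norm_num) xg hxg0
  set yg : PowerSeries k := (xg : PowerSeries k) - (zg : PowerSeries k) with hygdef
  have hzg20 : coeff 20 (zg : PowerSeries k) = 0 := by
    have h1 : coeff 20 yg = 0 := hzggood 20 (by decide)
    rw [hygdef, map_sub, hxg0 20 (by norm_num), zero_sub, neg_eq_zero] at h1
    exact h1
  obtain ⟨hzg21, hzg22, -⟩ := I_struct hI hf0 hg0 hfc hgc hzgI hzg20
  have hyg21 : coeff 21 yg = 0 := by
    rw [hygdef, map_sub, hxg0 21 (by norm_num), hzg21, sub_zero]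
  have hyg22 : coeff 22 yg = 0 := by
    rw [hygdef, map_sub, hxg0 22 (by norm_num), hzg22, sub_zero]
  have hgenG : genG k (coeff 27 yg) (coeff 33 yg) = d⁻¹ • g - zg := by
    apply Subtype.ext
    have hR : ((d⁻¹ • g - zg : A511 k) : PowerSeries k) = (X : PowerSeries k) ^ 26 + yg := by
      have hco : ((d⁻¹ • g - zg : A511 k) : PowerSeries k)
          = d⁻¹ • (g : PowerSeries k) - (zg : PowerSeries k) := rfl
      rw [hco, hygdef, hxgval]; ring
    rw [hR]
    show (X : PowerSeries k) ^ 26 + coeff 27 yg • (X : PowerSeries k) ^ 27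
        + coeff 33 yg • (X : PowerSeries k) ^ 33 = (X : PowerSeries k) ^ 26 + yg
    ext n
    simp only [map_add, map_smul, smul_eq_mul, PowerSeries.coeff_X_pow]
    by_cases e26 : n = 26
    · subst e26
      have : coeff 26 yg = 0 := hzggood 26 (by decide)
      simp [this]
    · by_cases e27 : n = 27
      · subst e27; simp
      · by_cases e33 : n = 33
        · subst e33; simp
        · by_cases e21 : n = 21
          · subst e21; simp [hyg21]
          · by_cases e22 : n = 22
            · subst e22; simp [hyg22]
            · have : coeff n yg = 0 := hzggood n (by
                simp only [Finset.mem_insert, Finset.mem_singleton]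
                tauto)
              simp [e26, e27, e33, this]
  have hGI : genG k (coeff 27 yg) (coeff 33 yg) ∈ I := by
    rw [hgenG]
    refine Submodule.sub_mem _ ?_ hzgI
    rw [Algebra.smul_def]
    exact I.mul_mem_left _ hg
  -- normalize h to get t^32 + ε t^33
  set ch : k := coeff 32 (h : PowerSeries k) with hchdef
  set xh : A511 k := ch⁻¹ • h - ⟨(X : PowerSeries k) ^ 32, X_pow_mem k (mem511 2 2 (by norm_num))⟩
    with hxhdef
  have hxhval : (xh : PowerSeries k) = ch⁻¹ • (h : PowerSeries k) - (X : PowerSeries k) ^ 32 := rfl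
  have hxh0 : ∀ n < 33, coeff n (xh : PowerSeries k) = 0 := by
    intro n hn
    rw [hxhval, map_sub, map_smul, smul_eq_mul, PowerSeries.coeff_X_pow]
    by_cases hn32 : n = 32
    · subst hn32
      rw [if_pos rfl, inv_mul_cancel₀ hhc, sub_self]
    · rw [if_neg hn32, hh0 n (by omega), mul_zero, sub_zero]
  obtain ⟨zh, hzhI, hzhgood⟩ := hclean 7 33 (by norm_num) (by norm_num) xh hxh0
  set yh : PowerSeries k := (xh : PowerSeries k) - (zh : PowerSeries k) with hyhdef
  have hzh20 : coeff 20 (zh : PowerSeries k) = 0 := by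
    have h1 : coeff 20 yh = 0 := hzhgood 20 (by decide)
    rw [hyhdef, map_sub, hxh0 20 (by norm_num), zero_sub, neg_eq_zero] at h1
    exact h1
  obtain ⟨hzh21, hzh22, hzh27c⟩ := I_struct hI hf0 hg0 hfc hgc hzhI hzh20
  have hzh25 : coeff 25 (zh : PowerSeries k) = 0 := by
    have h1 : coeff 25 yh = 0 := hzhgood 25 (by decide)
    rw [hyhdef, map_sub, hxh0 25 (by norm_num), zero_sub, neg_eq_zero] at h1
    exact h1
  have hzh26 : coeff 26 (zh : PowerSeries k) = 0 := by
    have h1 : coeff 26 yh = 0 := hzhgood 26 (by decide)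
    rw [hyhdef, map_sub, hxh0 26 (by norm_num), zero_sub, neg_eq_zero] at h1
    exact h1
  have hzh27 : coeff 27 (zh : PowerSeries k) = 0 := hzh27c hzh25 hzh26
  have hyh21 : coeff 21 yh = 0 := by
    rw [hyhdef, map_sub, hxh0 21 (by norm_num), hzh21, sub_zero]
  have hyh22 : coeff 22 yh = 0 := by
    rw [hyhdef, map_sub, hxh0 22 (by norm_num), hzh22, sub_zero]
  have hyh27 : coeff 27 yh = 0 := by
    rw [hyhdef, map_sub, hxh0 27 (by norm_num), hzh27, sub_zero]
  have hgenE : elt32 k (coeff 33 yh) = ch⁻¹ • h - zh := by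
    apply Subtype.ext
    have hR : ((ch⁻¹ • h - zh : A511 k) : PowerSeries k) = (X : PowerSeries k) ^ 32 + yh := by
      have hco : ((ch⁻¹ • h - zh : A511 k) : PowerSeries k)
          = ch⁻¹ • (h : PowerSeries k) - (zh : PowerSeries k) := rfl
      rw [hco, hyhdef, hxhval]; ring
    rw [hR]
    show (X : PowerSeries k) ^ 32 + coeff 33 yh • (X : PowerSeries k) ^ 33
        = (X : PowerSeries k) ^ 32 + yh
    ext n
    simp only [map_add, map_smul, smul_eq_mul, PowerSeries.coeff_X_pow]
    by_cases e32 : n = 32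
    · subst e32
      have : coeff 32 yh = 0 := hzhgood 32 (by decide)
      simp [this]
    · by_cases e33 : n = 33
      · subst e33; simp
      · by_cases e21 : n = 21
        · subst e21; simp [hyh21]
        · by_cases e22 : n = 22
          · subst e22; simp [hyh22]
          · by_cases e27 : n = 27
            · subst e27; simp [hyh27]
            · have : coeff n yh = 0 := hzhgood n (by
                simp only [Finset.mem_insert, Finset.mem_singleton]
                tauto)
              simp [e32, e33, this]
  have hEI : elt32 k (coeff 33 yh) ∈ I := by
    rw [hgenE]
    have hsm : ch⁻¹ • h ∈ I := by
      rw [Algebra.smul_def]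
      exact I.mul_mem_left _ hhI
    exact Submodule.sub_mem I hsm hzhI
  -- Nakayama argument: I = (genF, genG)
  set FF : A511 k := genF k (coeff 21 yf) (coeff 22 yf) (coeff 27 yf) (coeff 33 yf)
    with hFFdef
  set GG : A511 k := genG k (coeff 27 yg) (coeff 33 yg) with hGGdef
  set J : Ideal (A511 k) := Ideal.span {FF, GG} with hJdef
  have hJI : J ≤ I := by
    rw [hJdef, Ideal.span_le]
    intro t ht
    simp only [Set.mem_insert_iff, Set.mem_singleton_iff] at ht
    rcases ht with rfl | rfl
    · exact hFI
    · exact hGI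
  -- g ∈ J ⊔ m I
  have hgd : g = d • GG + d • zg := by
    have h1 : GG + zg = d⁻¹ • g := by
      rw [hgenG]
      abel
    calc g = d • (d⁻¹ • g) := by rw [smul_smul, mul_inv_cancel₀ hgc, one_smul]
      _ = d • (GG + zg) := by rw [h1]
      _ = d • GG + d • zg := smul_add d GG zg
  have hdzgI : d • zg ∈ I := by
    rw [Algebra.smul_def]
    exact I.mul_mem_left _ hzgI
  have hdzg20 : coeff 20 ((d • zg : A511 k) : PowerSeries k) = 0 := by
    have hco : ((d • zg : A511 k) : PowerSeries k) = d • (zg : PowerSeries k) := rfl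
    rw [hco, map_smul, smul_eq_mul, hzg20, mul_zero]
  obtain ⟨μ, hμ⟩ := decomp_mu hI hf0 hg0 hfc hf hg hdzgI hdzg20
  have hGG26 : coeff 26 ((GG : A511 k) : PowerSeries k) = 1 := by
    rw [hGGdef]
    show coeff 26 ((X : PowerSeries k) ^ 26 + coeff 27 yg • (X : PowerSeries k) ^ 27
      + coeff 33 yg • (X : PowerSeries k) ^ 33) = 1
    simp [PowerSeries.coeff_X_pow]
  have hGG25 : coeff 25 ((GG : A511 k) : PowerSeries k) = 0 := by
    rw [hGGdef]
    show coeff 25 ((X : PowerSeries k) ^ 26 + coeff 27 yg • (X : PowerSeries k) ^ 27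
      + coeff 33 yg • (X : PowerSeries k) ^ 33) = 0
    simp [PowerSeries.coeff_X_pow]
  have hμ1 : μ ≠ 1 := by
    intro hμeq
    subst hμeq
    have hGGm : (d • GG : A511 k) ∈ maximalIdealOf k (A511 k) * I := by
      have hrw : (d • GG : A511 k) = -(d • zg - algebraMap k (A511 k) 1 * g) := by
        rw [map_one, one_mul, hgd]
        ring
      rw [hrw]
      exact Submodule.neg_mem _ hμ
    have hfacts := (mI_facts hI hf0 hg0 hGGm).2
    have h26 : coeff 26 ((d • GG : A511 k) : PowerSeries k) = d := by
      have hco : ((d • GG : A511 k) : PowerSeries k) = d • ((GG : A511 k) : PowerSeries k) := rfl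
      rw [hco, map_smul, smul_eq_mul, hGG26, mul_one]
    have h25 : coeff 25 ((d • GG : A511 k) : PowerSeries k) = 0 := by
      have hco : ((d • GG : A511 k) : PowerSeries k) = d • ((GG : A511 k) : PowerSeries k) := rfl
      rw [hco, map_smul, smul_eq_mul, hGG25, mul_zero]
    rw [h26, h25, mul_zero] at hfacts
    exact hgc (by
      rcases mul_eq_zero.mp hfacts with hh | hh
      · exact absurd hh hfc
      · exact hh)
  have hgJ : g ∈ J ⊔ maximalIdealOf k (A511 k) * I := by
    have hkey : (1 - algebraMap k (A511 k) μ) * g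
        = d • GG + (d • zg - algebraMap k (A511 k) μ * g) := by
      rw [hgd]; ring
    have hmem : d • GG + (d • zg - algebraMap k (A511 k) μ * g)
        ∈ J ⊔ maximalIdealOf k (A511 k) * I := by
      refine Submodule.add_mem _ (Submodule.mem_sup_left ?_) (Submodule.mem_sup_right hμ)
      rw [Algebra.smul_def]
      exact Ideal.mul_mem_left _ _ (Ideal.subset_span (by simp))
    have hunit : algebraMap k (A511 k) (1 - μ)⁻¹ * (1 - algebraMap k (A511 k) μ) = 1 := by
      rw [show (1 : A511 k) - algebraMap k (A511 k) μ = algebraMap k (A511 k) (1 - μ) by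
        rw [map_sub, map_one]]
      rw [← map_mul, inv_mul_cancel₀ (sub_ne_zero_of_ne (Ne.symm hμ1)), map_one]
    have hginv : g = algebraMap k (A511 k) (1 - μ)⁻¹ * ((1 - algebraMap k (A511 k) μ) * g) := by
      rw [← mul_assoc, hunit, one_mul]
    rw [hginv, hkey]
    exact Ideal.mul_mem_left _ _ hmem
  -- f ∈ J ⊔ m I
  have hfd : f = c • FF + c • zf := by
    have h1 : FF + zf = c⁻¹ • f := by
      rw [hgenF]
      abel
    calc f = c • (c⁻¹ • f) := by rw [smul_smul, mul_inv_cancel₀ hfc, one_smul]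
      _ = c • (FF + zf) := by rw [h1]
      _ = c • FF + c • zf := smul_add c FF zf
  have hczfI : c • zf ∈ I := by
    rw [Algebra.smul_def]
    exact I.mul_mem_left _ hzfI
  have hczf20 : coeff 20 ((c • zf : A511 k) : PowerSeries k) = 0 := by
    have hzf20 : coeff 20 (zf : PowerSeries k) = 0 := by
      have h1 : coeff 20 yf = 0 := hzfgood 20 (by decide)
      rw [hyfdef, map_sub, hxf0 20 (by norm_num), zero_sub, neg_eq_zero] at h1
      exact h1
    have hco : ((c • zf : A511 k) : PowerSeries k) = c • (zf : PowerSeries k) := rfl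
    rw [hco, map_smul, smul_eq_mul, hzf20, mul_zero]
  obtain ⟨ν, hν⟩ := decomp_mu hI hf0 hg0 hfc hf hg hczfI hczf20
  have hfJ : f ∈ J ⊔ maximalIdealOf k (A511 k) * I := by
    have hkey : f = c • FF + (algebraMap k (A511 k) ν * g
        + (c • zf - algebraMap k (A511 k) ν * g)) := by
      rw [hfd]; ring
    rw [hkey]
    refine Submodule.add_mem _ (Submodule.mem_sup_left ?_) (Submodule.add_mem _ ?_ ?_)
    · rw [Algebra.smul_def]
      exact Ideal.mul_mem_left _ _ (Ideal.subset_span (by simp))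
    · exact Ideal.mul_mem_left _ _ hgJ
    · exact Submodule.mem_sup_right hν
  -- Nakayama
  have hle' : Ideal.span {f, g} ≤ J ⊔ maximalIdealOf k (A511 k) * I := by
    rw [Ideal.span_le]
    intro t ht
    simp only [Set.mem_insert_iff, Set.mem_singleton_iff] at ht
    rcases ht with rfl | rfl
    · exact hfJ
    · exact hgJ
  have hle : I ≤ J ⊔ (maximalIdealOf k (A511 k)) • I := by
    rw [Ideal.smul_eq_mul]
    exact le_trans (le_of_eq hI) hle'
  have hFG : I.FG := ⟨{f, g}, by rw [Finset.coe_insert, Finset.coe_singleton]; exact hI.symm⟩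
  have hIJ : I = J :=
    le_antisymm (Submodule.le_of_le_smul_of_le_jacobson_bot hFG maxIdeal_le_jacobson hle) hJI
  exact ⟨coeff 21 yf, coeff 22 yf, coeff 27 yf, coeff 33 yf,
    coeff 27 yg, coeff 33 yg, coeff 33 yh, hIJ, hEI⟩
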